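/- Let G = Γ(𝔽_p[x]/(x^{2b})), b ≥ 1, with the partition V_1,…,V_{2b−1} by minimal degree, and let W_i be the space of real-valued functions on V(G) supported on V_i with coordinate sum zero. Then for 1 ≤ i ≤ b−1 every nonzero vector of W_i is an eigenvector of the adjacency matrix A(G) with eigenvalue 0, and for b ≤ i ≤ 2b−1 every nonzero vector of W_i is an eigenvector of A(G) with eigenvalue −1. -/

import Mathlib

open Polynomial

noncomputable section

/-- The truncated polynomial ring `𝔽_p[x]/(x^c)`. -/
abbrev TPR (p c : ℕ) : Type := AdjoinRoot (X ^ c : (ZMod p)[X])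

instance (p c : ℕ) [Fact p.Prime] : Finite (TPR p c) := by
  have hb : PowerBasis (ZMod p) (TPR p c) :=
    AdjoinRoot.powerBasis (pow_ne_zero c Polynomial.X_ne_zero)
  have : Module.Finite (ZMod p) (TPR p c) := Module.Finite.of_basis hb.basis
  exact Module.finite_of_finite (ZMod p)

/-- The canonical representative (the unique representative of degree `< c`)
of an element of `𝔽_p[x]/(x^c)`. -/
def canon {p c : ℕ} (f : TPR p c) : (ZMod p)[X] :=
  Function.surjInv (AdjoinRoot.mk_surjective (g := (X ^ c : (ZMod p)[X]))) f %ₘ X ^ c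

/-- The minimal degree: the least exponent with nonzero coefficient in the
canonical representative. -/
def mindeg {p c : ℕ} (f : TPR p c) : ℕ := (canon f).natTrailingDegree

/-- The set of nonzero zero-divisors of `𝔽_p[x]/(x^c)`. -/
def zd (p c : ℕ) : Set (TPR p c) := {f | f ≠ 0 ∧ ∃ g, g ≠ 0 ∧ f * g = 0}

/-- The zero-divisor graph of `𝔽_p[x]/(x^c)`: vertices are the nonzero
zero-divisors, and `f ~ g` iff `f ≠ g` and `f * g = 0`. -/
def zdGraph (p c : ℕ) : SimpleGraph (zd p c) where
  Adj a b := a ≠ b ∧ (a : TPR p c) * (b : TPR p c) = 0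
  symm := ⟨fun a b h => ⟨h.1.symm, by rw [mul_comm]; exact h.2⟩⟩
  loopless := ⟨fun a h => h.1 rfl⟩

noncomputable instance (p c : ℕ) [Fact p.Prime] : Fintype (zd p c) := Fintype.ofFinite _

open scoped Classical in
/-- The adjacency matrix of the zero-divisor graph, over `ℝ`. -/
def adjM (p c : ℕ) : Matrix (zd p c) (zd p c) ℝ :=
  Matrix.of fun a b => if (zdGraph p c).Adj a b then 1 else 0

open scoped Classical in
/-- The diagonal degree matrix of the zero-divisor graph, over `ℝ`. -/
def degM (p c : ℕ) : Matrix (zd p c) (zd p c) ℝ :=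
  Matrix.diagonal fun v => (((zdGraph p c).neighborSet v).ncard : ℝ)

/-! ### Auxiliary lemmas -/

lemma mk_canon {p c : ℕ} (f : TPR p c) : AdjoinRoot.mk (X ^ c) (canon f) = f := by
  unfold canon
  rw [Polynomial.modByMonic_eq_sub_mul_div _ (X ^ c), map_sub, map_mul,
    AdjoinRoot.mk_self, zero_mul, sub_zero,
    Function.surjInv_eq (AdjoinRoot.mk_surjective (g := (X ^ c : (ZMod p)[X]))) f]

lemma canon_ne_zero {p c : ℕ} {f : TPR p c} (hf : f ≠ 0) : canon f ≠ 0 := by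
  intro h
  apply hf
  rw [← mk_canon f, h, map_zero]

lemma X_pow_c_dvd_iff {p c : ℕ} {h : (ZMod p)[X]} (hh : h ≠ 0) :
    (X : (ZMod p)[X]) ^ c ∣ h ↔ c ≤ h.natTrailingDegree := by
  rw [Polynomial.X_pow_dvd_iff]
  constructor
  · intro H
    exact Polynomial.le_natTrailingDegree hh H
  · intro H d hd
    exact Polynomial.coeff_eq_zero_of_lt_natTrailingDegree (lt_of_lt_of_le hd H)

lemma tpr_mul_eq_zero_iff {p c : ℕ} [Fact p.Prime] {f g : TPR p c}
    (hf : f ≠ 0) (hg : g ≠ 0) :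
    f * g = 0 ↔ c ≤ mindeg f + mindeg g := by
  have hcf : canon f ≠ 0 := canon_ne_zero hf
  have hcg : canon g ≠ 0 := canon_ne_zero hg
  have : f * g = AdjoinRoot.mk (X ^ c) (canon f * canon g) := by
    rw [map_mul, mk_canon, mk_canon]
  rw [this, AdjoinRoot.mk_eq_zero, X_pow_c_dvd_iff (mul_ne_zero hcf hcg),
    Polynomial.natTrailingDegree_mul hcf hcg]
  rfl

open scoped Classical in
/-- Vectors supported on `V_i` with coordinate sum zero are eigenvectors of the
adjacency matrix of `Γ(𝔽_p[x]/(x^(2b)))`, with eigenvalue `0` for `1 ≤ i ≤ b-1`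
and eigenvalue `-1` for `b ≤ i ≤ 2b-1`. -/
theorem stmt_14 (p b : ℕ) [Fact p.Prime] (hb : 1 ≤ b) (i : ℕ)
    (x : zd p (2 * b) → ℝ)
    (hsupp : ∀ v : zd p (2 * b), x v ≠ 0 → mindeg (v : TPR p (2 * b)) = i)
    (hsum : ∑ v ∈ Finset.univ.filter
        (fun v : zd p (2 * b) => mindeg (v : TPR p (2 * b)) = i), x v = 0) :
    (1 ≤ i → i ≤ b - 1 → (adjM p (2 * b)).mulVec x = (0 : ℝ) • x) ∧
    (b ≤ i → i ≤ 2 * b - 1 → (adjM p (2 * b)).mulVec x = (-1 : ℝ) • x) := by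
  have hc : 2 ≤ 2 * b := by omega
  let c := 2 * b
  have key : ∀ v w : zd p c,
      ((v : TPR p c) * (w : TPR p c) = 0) ↔ c ≤ mindeg (v : TPR p c) + mindeg (w : TPR p c) :=
    fun v w => tpr_mul_eq_zero_iff v.2.1 w.2.1
  -- Expand mulVec pointwise
  have hmv : ∀ v : zd p c, (adjM p c).mulVec x v =
      ∑ w : zd p c, if (zdGraph p c).Adj v w then x w else 0 := by
    intro v
    simp [Matrix.mulVec, dotProduct, adjM, ite_mul, one_mul, zero_mul]
  -- Case A: if ¬ (c ≤ mindeg v + i) then the row sum is 0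
  have caseA : ∀ v : zd p c, ¬ c ≤ mindeg (v : TPR p c) + i → (adjM p c).mulVec x v = 0 := by
    intro v hv
    rw [hmv v]
    apply Finset.sum_eq_zero
    intro w _
    by_cases hxw : x w = 0
    · simp [hxw]
    · have hwi := hsupp w hxw
      have : ¬ (zdGraph p c).Adj v w := by
        intro hadj
        exact hv (by rw [← hwi]; exact (key v w).1 hadj.2)
      simp [this]
  -- Case B: if c ≤ mindeg v + i then the row sum is -(x v)
  have caseB : ∀ v : zd p c, c ≤ mindeg (v : TPR p c) + i → (adjM p c).mulVec x v = -(x v) := by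
    intro v hv
    rw [hmv v]
    have step1 : ∀ w : zd p c, (if (zdGraph p c).Adj v w then x w else 0) =
        (if mindeg (w : TPR p c) = i then x w else 0) -
          (if w = v then (if mindeg (w : TPR p c) = i then x w else 0) else 0) := by
      intro w
      by_cases hxw : x w = 0
      · by_cases h1 : (zdGraph p c).Adj v w <;> by_cases h2 : mindeg (w : TPR p c) = i <;>
          by_cases h3 : w = v <;> simp [h1, h2, h3, hxw]
      · have hwi := hsupp w hxw
        have hmul : (v : TPR p c) * (w : TPR p c) = 0 := (key v w).2 (by omega)
        by_cases h3 : w = v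
        · subst h3
          simp [hwi, SimpleGraph.irrefl]
        · have hadj : (zdGraph p c).Adj v w := ⟨fun h => h3 h.symm, hmul⟩
          simp [hadj, hwi, h3]
    rw [Finset.sum_congr rfl (fun w _ => step1 w), Finset.sum_sub_distrib]
    have hS : ∑ w : zd p c, (if mindeg (w : TPR p c) = i then x w else 0) = 0 := by
      rw [← Finset.sum_filter]
      exact hsum
    have hsingle : ∑ w : zd p c,
        (if w = v then (if mindeg (w : TPR p c) = i then x w else 0) else 0) =
        (if mindeg (v : TPR p c) = i then x v else 0) := by
      rw [Finset.sum_ite_eq' Finset.univ v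
        (fun w => if mindeg (w : TPR p c) = i then x w else 0)]
      simp
    have hxv : (if mindeg (v : TPR p c) = i then x v else 0) = x v := by
      by_cases h : mindeg (v : TPR p c) = i
      · simp [h]
      · have hx0 : x v = 0 := by by_contra hx; exact h (hsupp v hx)
        simp [h, hx0]
    rw [hS, hsingle, hxv, zero_sub]
  constructor
  · intro hi1 hi2
    funext v
    have : ((0 : ℝ) • x) v = 0 := by simp
    rw [this]
    by_cases hv : c ≤ mindeg (v : TPR p c) + i
    · rw [caseB v hv]
      have hxv : x v = 0 := by
        by_contra hx
        have := hsupp v hx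
        omega
      rw [hxv, neg_zero]
    · exact caseA v hv
  · intro hi1 hi2
    funext v
    have : ((-1 : ℝ) • x) v = -(x v) := by simp
    rw [this]
    by_cases hv : c ≤ mindeg (v : TPR p c) + i
    · exact caseB v hv
    · rw [caseA v hv]
      have hxv : x v = 0 := by
        by_contra hx
        have := hsupp v hx
        omega
      rw [hxv, neg_zero]
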